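/- Let a0, c, mu0, mu1, σ > 0 and b ∈ ℝ with 0 < a0 < 2c. Set E = 3·a0²·mu1² − 2·a0·b·mu1 − 4·a0·mu0 − b² + 4·a0 and assume E·(a0 − c) > 0. Define B = (a0·mu1 − b)/(2·a0), ω = −(a0·mu1² − b·mu1 − mu0 + σ)·mu1, λ = √(E/(16·a0·(a0 − c))), d2 = 3·√(2c − a0)·E/(8·√a0·(a0 − c)), h2 = 3·E/(8·(a0 − c)), and h0 = −(3·a0²·c·mu1² − 2·a0·b·c·mu1 + 4·a0² − 4·a0·c·mu0 − b²·c − 4·a0²·σ + 4·a0·c·σ)/(4·a0·(a0 − c)). Then f(ξ) = d2·sech²(λ·ξ) and g(ξ) = h0 + h2·sech²(λ·ξ) satisfy the Schrödinger KdV–KdV associated ODE system with parameters a0, c, mu0, mu1, b, wave speed σ, and phase shifts B, ω. -/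

import Mathlib

set_option maxHeartbeats 1600000 in
theorem stmt_4
    (a0 c mu0 mu1 b : ℝ)
    (ha0 : 0 < a0) (hc : 0 < c) (hmu0 : 0 < mu0) (hmu1 : 0 < mu1)
    (σ : ℝ) (hσ : 0 < σ) (ha0lt : a0 < 2*c)
    (E : ℝ) (hE : E = 3*a0^2*mu1^2 - 2*a0*b*mu1 - 4*a0*mu0 - b^2 + 4*a0) (hEsgn : E * (a0 - c) > 0)
    (B ω lam d2 h2 h0 : ℝ)
    (h_B : B = (a0*mu1 - b)/(2*a0))
    (h_ω : ω = -(a0*mu1^2 - b*mu1 - mu0 + σ)*mu1)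
    (h_lam : lam = Real.sqrt (E/(16*a0*(a0 - c))))
    (h_d2 : d2 = 3*Real.sqrt (2*c - a0)*E/(8*Real.sqrt a0*(a0 - c)))
    (h_h2 : h2 = 3*E/(8*(a0 - c)))
    (h_h0 : h0 = -(3*a0^2*c*mu1^2 - 2*a0*b*c*mu1 + 4*a0^2 - 4*a0*c*mu0 - b^2*c - 4*a0^2*σ + 4*a0*c*σ)/(4*a0*(a0 - c)))
    (f g : ℝ → ℝ)
    (hfdef : ∀ ξ : ℝ, f ξ = d2 * (1/Real.cosh (lam*ξ))^2)
    (hgdef : ∀ ξ : ℝ, g ξ = h0 + h2 * (1/Real.cosh (lam*ξ))^2) :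
    ∀ ξ : ℝ,
      (deriv f ξ * g ξ + f ξ * deriv g ξ + a0 * iteratedDeriv 3 f ξ + (mu0 - σ - 3*a0*B^2 - 2*b*B) * deriv f ξ = 0) ∧
      ((B + mu1) * f ξ * g ξ + (3*a0*B + b) * iteratedDeriv 2 f ξ + (ω + B*mu0 - B*σ - a0*B^3 - b*B^2) * f ξ = 0) ∧
      (f ξ * deriv f ξ + g ξ * deriv g ξ + c * iteratedDeriv 3 g ξ + (1 - σ) * deriv g ξ = 0) := by
  have hch : ∀ x : ℝ, Real.cosh x ≠ 0 := fun x => (Real.cosh_pos x).ne'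
  have ha0' : a0 ≠ 0 := ha0.ne'
  have hac : a0 - c ≠ 0 := by
    intro h; rw [h, mul_zero] at hEsgn; exact lt_irrefl 0 hEsgn
  -- lam^2
  have hargpos : 0 < E/(16*a0*(a0 - c)) := by
    have h1 : E/(16*a0*(a0 - c)) = (E*(a0-c))/(16*a0*(a0-c)^2) := by
      field_simp
    rw [h1]
    apply div_pos hEsgn
    positivity
  have hlam2 : lam^2 = E/(16*a0*(a0 - c)) := by
    rw [h_lam, Real.sq_sqrt hargpos.le]
  -- d2^2
  have hd2sq : d2^2 = 9*(2*c-a0)*E^2/(64*a0*(a0-c)^2) := by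
    have h1 : Real.sqrt (2*c-a0)^2 = 2*c-a0 := Real.sq_sqrt (by linarith)
    have h2 : Real.sqrt a0 ^2 = a0 := Real.sq_sqrt ha0.le
    have h3 : Real.sqrt a0 ≠ 0 := by positivity
    have h4 : (8*Real.sqrt a0*(a0-c))^2 = 64*a0*(a0-c)^2 := by
      rw [mul_pow, mul_pow, h2]; ring
    rw [h_d2, div_pow, h4, mul_pow, mul_pow, h1]
    norm_num
  -- derivative of sech^2
  have hS1 : ∀ ξ : ℝ, HasDerivAt (fun x => (1/Real.cosh (lam*x))^2)
      (-2*lam*Real.sinh (lam*ξ)/Real.cosh (lam*ξ)^3) ξ := by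
    intro ξ
    have h1 : HasDerivAt (fun x : ℝ => lam*x) lam ξ := by
      simpa using (hasDerivAt_id ξ).const_mul lam
    have h2 : HasDerivAt (fun x => Real.cosh (lam*x)) (Real.sinh (lam*ξ)*lam) ξ :=
      (Real.hasDerivAt_cosh (lam*ξ)).comp ξ h1
    have h3 : HasDerivAt (fun x => (Real.cosh (lam*x))⁻¹)
        (-(Real.sinh (lam*ξ)*lam)/(Real.cosh (lam*ξ))^2) ξ := h2.inv (hch _)
    have h4 := h3.fun_pow 2
    simp only [one_div]
    refine h4.congr_deriv ?_
    norm_num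
    field_simp
  have hS2 : ∀ ξ : ℝ, HasDerivAt (fun x => -2*lam*Real.sinh (lam*x)/Real.cosh (lam*x)^3)
      (lam^2*(4*(1/Real.cosh (lam*ξ))^2 - 6*((1/Real.cosh (lam*ξ))^2)^2)) ξ := by
    intro ξ
    have h1 : HasDerivAt (fun x : ℝ => lam*x) lam ξ := by
      simpa using (hasDerivAt_id ξ).const_mul lam
    have h2 : HasDerivAt (fun x => Real.cosh (lam*x)) (Real.sinh (lam*ξ)*lam) ξ :=
      (Real.hasDerivAt_cosh (lam*ξ)).comp ξ h1
    have hN : HasDerivAt (fun x => -2*lam*Real.sinh (lam*x)) (-2*lam*(Real.cosh (lam*ξ)*lam)) ξ :=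
      ((Real.hasDerivAt_sinh (lam*ξ)).comp ξ h1).const_mul (-2*lam)
    have hD : HasDerivAt (fun x => Real.cosh (lam*x)^3)
        (3*Real.cosh (lam*ξ)^2*(Real.sinh (lam*ξ)*lam)) ξ := by
      simpa using h2.fun_pow 3
    have h5 := hN.div hD (pow_ne_zero 3 (hch _))
    refine h5.congr_deriv ?_
    have hs : Real.sinh (lam*ξ)^2 = Real.cosh (lam*ξ)^2 - 1 := by
      have := Real.cosh_sq (lam*ξ); linarith
    field_simp
    linear_combination ((6:ℝ)*lam^2) * hs
  have hS3 : ∀ ξ : ℝ, HasDerivAt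
      (fun x => lam^2*(4*(1/Real.cosh (lam*x))^2 - 6*((1/Real.cosh (lam*x))^2)^2))
      (lam^2*(4 - 12*(1/Real.cosh (lam*ξ))^2)*(-2*lam*Real.sinh (lam*ξ)/Real.cosh (lam*ξ)^3)) ξ := by
    intro ξ
    have h := hS1 ξ
    have h5 := (((h.const_mul 4).sub ((h.fun_pow 2).const_mul 6)).const_mul (lam^2))
    refine h5.congr_deriv ?_
    ring
  -- function equalities
  have hfe : f = fun x => d2 * (1/Real.cosh (lam*x))^2 := funext hfdef
  have hge : g = fun x => h0 + h2 * (1/Real.cosh (lam*x))^2 := funext hgdef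
  have hf1 : deriv f = fun ξ => d2 * (-2*lam*Real.sinh (lam*ξ)/Real.cosh (lam*ξ)^3) := by
    rw [hfe]; funext ξ; exact ((hS1 ξ).const_mul d2).deriv
  have hf2 : deriv (deriv f) = fun ξ =>
      d2 * (lam^2*(4*(1/Real.cosh (lam*ξ))^2 - 6*((1/Real.cosh (lam*ξ))^2)^2)) := by
    rw [hf1]; funext ξ; exact ((hS2 ξ).const_mul d2).deriv
  have hf3 : deriv (deriv (deriv f)) = fun ξ =>
      d2 * (lam^2*(4 - 12*(1/Real.cosh (lam*ξ))^2)*(-2*lam*Real.sinh (lam*ξ)/Real.cosh (lam*ξ)^3)) := by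
    rw [hf2]; funext ξ; exact ((hS3 ξ).const_mul d2).deriv
  have hg1 : deriv g = fun ξ => h2 * (-2*lam*Real.sinh (lam*ξ)/Real.cosh (lam*ξ)^3) := by
    rw [hge]; funext ξ; exact (((hS1 ξ).const_mul h2).const_add h0).deriv
  have hg2 : deriv (deriv g) = fun ξ =>
      h2 * (lam^2*(4*(1/Real.cosh (lam*ξ))^2 - 6*((1/Real.cosh (lam*ξ))^2)^2)) := by
    rw [hg1]; funext ξ; exact ((hS2 ξ).const_mul h2).deriv
  have hg3 : deriv (deriv (deriv g)) = fun ξ =>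
      h2 * (lam^2*(4 - 12*(1/Real.cosh (lam*ξ))^2)*(-2*lam*Real.sinh (lam*ξ)/Real.cosh (lam*ξ)^3)) := by
    rw [hg2]; funext ξ; exact ((hS3 ξ).const_mul h2).deriv
  have hif2 : iteratedDeriv 2 f = deriv (deriv f) := by
    rw [iteratedDeriv_succ, iteratedDeriv_one]
  have hif3 : iteratedDeriv 3 f = deriv (deriv (deriv f)) := by
    rw [iteratedDeriv_succ, iteratedDeriv_succ, iteratedDeriv_one]
  have hig3 : iteratedDeriv 3 g = deriv (deriv (deriv g)) := by
    rw [iteratedDeriv_succ, iteratedDeriv_succ, iteratedDeriv_one]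
  -- key algebraic identities, for arbitrary p q
  have key1 : ∀ p q : ℝ,
      (d2*q)*(h0 + h2*p) + (d2*p)*(h2*q) + a0*(d2*(lam^2*(4 - 12*p)*q))
        + (mu0 - σ - 3*a0*B^2 - 2*b*B)*(d2*q) = 0 := by
    intro p q
    rw [hlam2, h_B, h_h2, h_h0, hE]
    field_simp
    ring
  have key2 : ∀ p : ℝ,
      (B + mu1)*(d2*p)*(h0 + h2*p) + (3*a0*B + b)*(d2*(lam^2*(4*p - 6*p^2)))
        + (ω + B*mu0 - B*σ - a0*B^3 - b*B^2)*(d2*p) = 0 := by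
    intro p
    rw [hlam2, h_B, h_ω, h_h2, h_h0, hE]
    field_simp
    ring
  have key3 : ∀ p q : ℝ,
      d2^2*(p*q) + (h0 + h2*p)*(h2*q) + c*(h2*(lam^2*(4 - 12*p)*q))
        + (1 - σ)*(h2*q) = 0 := by
    intro p q
    rw [hd2sq, hlam2, h_h2, h_h0, hE]
    field_simp
    ring
  intro ξ
  have Df : deriv f ξ = d2 * (-2*lam*Real.sinh (lam*ξ)/Real.cosh (lam*ξ)^3) := by rw [hf1]
  have Dg : deriv g ξ = h2 * (-2*lam*Real.sinh (lam*ξ)/Real.cosh (lam*ξ)^3) := by rw [hg1]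
  have D2f : iteratedDeriv 2 f ξ = d2 * (lam^2*(4*(1/Real.cosh (lam*ξ))^2 - 6*((1/Real.cosh (lam*ξ))^2)^2)) := by
    rw [hif2, hf2]
  have D3f : iteratedDeriv 3 f ξ = d2 * (lam^2*(4 - 12*(1/Real.cosh (lam*ξ))^2)*(-2*lam*Real.sinh (lam*ξ)/Real.cosh (lam*ξ)^3)) := by
    rw [hif3, hf3]
  have D3g : iteratedDeriv 3 g ξ = h2 * (lam^2*(4 - 12*(1/Real.cosh (lam*ξ))^2)*(-2*lam*Real.sinh (lam*ξ)/Real.cosh (lam*ξ)^3)) := by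
    rw [hig3, hg3]
  refine ⟨?_, ?_, ?_⟩
  · rw [Df, Dg, D3f, hfdef ξ, hgdef ξ]
    linear_combination key1 ((1/Real.cosh (lam*ξ))^2) (-2*lam*Real.sinh (lam*ξ)/Real.cosh (lam*ξ)^3)
  · rw [D2f, hfdef ξ, hgdef ξ]
    linear_combination key2 ((1/Real.cosh (lam*ξ))^2)
  · rw [Df, Dg, D3g, hfdef ξ, hgdef ξ]
    linear_combination key3 ((1/Real.cosh (lam*ξ))^2) (-2*lam*Real.sinh (lam*ξ)/Real.cosh (lam*ξ)^3)
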